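/- Let v(t,x) := (1/√(4πt)) ∫₀^∞ (e^{−(x−y)²/(4t)} − e^{−(x+y)²/(4t)}) v₀(y) dy for t > 0, x > 0, where v₀(x) = 1 for 0 < x ≤ 1 and v₀(x) = 1/x² for x > 1. Then for every ε > 0, sup over all t > 0 and x > 0 of the quantity e^{−x}·v(t,x)·(t+1)^{3/2 − ε} is finite. -/

import Mathlib

open Real Filter MeasureTheory Set

noncomputable section

/-- The initial datum `v₀(x) = 1` for `0 < x ≤ 1`, `v₀(x) = 1/x²` for `x > 1`. -/
def v₀ (x : ℝ) : ℝ := if x ≤ 1 then 1 else 1 / x ^ 2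

/-- The solution of the Dirichlet heat equation on the half-line with initial datum `v₀`. -/
def vheat (t x : ℝ) : ℝ :=
  (Real.sqrt (4 * Real.pi * t))⁻¹ *
    ∫ y in Set.Ioi (0 : ℝ),
      (Real.exp (-(x - y) ^ 2 / (4 * t)) - Real.exp (-(x + y) ^ 2 / (4 * t))) * v₀ y


lemma v₀_nonneg (y : ℝ) : 0 ≤ v₀ y := by
  unfold v₀; split
  · norm_num
  · positivity

lemma v₀_le_one {y : ℝ} (hy : 0 < y) : v₀ y ≤ 1 := by
  unfold v₀; split
  · exact le_refl 1
  · next h =>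
    push_neg at h
    rw [div_le_one (by positivity)]
    nlinarith

lemma measurable_v₀ : Measurable v₀ := by
  unfold v₀
  exact Measurable.ite (measurableSet_le measurable_id measurable_const) measurable_const
    (measurable_const.div (measurable_id.pow_const 2))

lemma kernel_eq (t x : ℝ) :
    (fun y : ℝ => Real.exp (-(x - y) ^ 2 / (4 * t))) =
      fun y => Real.exp (-(4 * t)⁻¹ * (y - x) ^ 2) := by
  funext y; congr 1; field_simp; ring

lemma integrable_kernel (t x : ℝ) (ht : 0 < t) :
    Integrable (fun y : ℝ => Real.exp (-(x - y) ^ 2 / (4 * t))) := by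
  have hb : 0 < (4 * t)⁻¹ := by positivity
  have h := (integrable_exp_neg_mul_sq hb).comp_sub_right x
  rw [kernel_eq]; exact h

lemma gauss_int (t x : ℝ) (ht : 0 < t) :
    ∫ y : ℝ, Real.exp (-(x - y) ^ 2 / (4 * t)) = Real.sqrt (4 * Real.pi * t) := by
  rw [kernel_eq]
  rw [integral_sub_right_eq_self (μ := volume) (fun z : ℝ => Real.exp (-(4 * t)⁻¹ * z ^ 2)) x]
  rw [integral_gaussian]
  congr 1
  field_simp

lemma diff_nonneg_pt {t x y : ℝ} (ht : 0 < t) (hx : 0 < x) (hy : 0 < y) :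
    0 ≤ Real.exp (-(x - y) ^ 2 / (4 * t)) - Real.exp (-(x + y) ^ 2 / (4 * t)) := by
  have : Real.exp (-(x + y) ^ 2 / (4 * t)) ≤ Real.exp (-(x - y) ^ 2 / (4 * t)) := by
    apply Real.exp_le_exp.2
    have h2 : (x - y) ^ 2 ≤ (x + y) ^ 2 := by nlinarith
    have h3 : -(x + y) ^ 2 ≤ -(x - y) ^ 2 := by linarith
    gcongr
  linarith

lemma vheat_nonneg (t x : ℝ) (ht : 0 < t) (hx : 0 < x) : 0 ≤ vheat t x := by
  unfold vheat
  apply mul_nonneg (by positivity)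
  apply setIntegral_nonneg measurableSet_Ioi
  intro y hy
  exact mul_nonneg (diff_nonneg_pt ht hx hy) (v₀_nonneg y)

lemma vheat_le_one (t x : ℝ) (ht : 0 < t) (hx : 0 < x) : vheat t x ≤ 1 := by
  have hsq : 0 < Real.sqrt (4 * Real.pi * t) := by
    apply Real.sqrt_pos.2; positivity
  have hI : (∫ y in Set.Ioi (0 : ℝ),
      (Real.exp (-(x - y) ^ 2 / (4 * t)) - Real.exp (-(x + y) ^ 2 / (4 * t))) * v₀ y)
      ≤ Real.sqrt (4 * Real.pi * t) := by
    have step1 : (∫ y in Set.Ioi (0 : ℝ),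
        (Real.exp (-(x - y) ^ 2 / (4 * t)) - Real.exp (-(x + y) ^ 2 / (4 * t))) * v₀ y)
        ≤ ∫ y in Set.Ioi (0 : ℝ), Real.exp (-(x - y) ^ 2 / (4 * t)) := by
      apply integral_mono_of_nonneg
      · rw [EventuallyLE, ae_restrict_iff' measurableSet_Ioi]
        filter_upwards with y hy
        exact mul_nonneg (diff_nonneg_pt ht hx hy) (v₀_nonneg y)
      · exact (integrable_kernel t x ht).integrableOn
      · rw [EventuallyLE, ae_restrict_iff' measurableSet_Ioi]
        filter_upwards with y hy
        calc (Real.exp (-(x - y) ^ 2 / (4 * t)) - Real.exp (-(x + y) ^ 2 / (4 * t))) * v₀ y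
            ≤ Real.exp (-(x - y) ^ 2 / (4 * t)) * 1 := by
              apply mul_le_mul ?_ (v₀_le_one hy) (v₀_nonneg y) (Real.exp_nonneg _)
              linarith [Real.exp_pos (-(x + y) ^ 2 / (4 * t))]
          _ = _ := mul_one _
    refine step1.trans ?_
    rw [← gauss_int t x ht]
    apply setIntegral_le_integral (integrable_kernel t x ht)
    filter_upwards with y using Real.exp_nonneg _
  unfold vheat
  calc (Real.sqrt (4 * Real.pi * t))⁻¹ * _ ≤
      (Real.sqrt (4 * Real.pi * t))⁻¹ * Real.sqrt (4 * Real.pi * t) :=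
        mul_le_mul_of_nonneg_left hI (by positivity)
    _ = 1 := inv_mul_cancel₀ hsq.ne'

lemma exp_diff_le {a b : ℝ} (ha : 0 ≤ a) (hab : a ≤ b) :
    Real.exp (-a) - Real.exp (-b) ≤ b - a := by
  have h1 : Real.exp (-b) = Real.exp (-a) * Real.exp (a - b) := by
    rw [← Real.exp_add]; ring_nf
  have h2 : a - b + 1 ≤ Real.exp (a - b) := Real.add_one_le_exp _
  have h3 : Real.exp (-a) ≤ 1 := Real.exp_le_one_iff.2 (by linarith)
  nlinarith [Real.exp_pos (-a)]

lemma self_mul_exp_neg_le_one {x : ℝ} : x * Real.exp (-x) ≤ 1 := by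
  rcases le_or_gt x 0 with h | h
  · have := Real.exp_pos (-x)
    nlinarith
  · have h2 : x + 1 ≤ Real.exp x := Real.add_one_le_exp _
    rw [Real.exp_neg]
    rw [mul_inv_le_iff₀ (Real.exp_pos x)]
    linarith

lemma min_le_rpow {a l : ℝ} (ha : 0 < a) (hl0 : 0 ≤ l) (hl1 : l ≤ 1) :
    min 1 a ≤ a ^ l := by
  rcases le_or_gt a 1 with h | h
  · calc min 1 a ≤ a := min_le_right _ _
      _ = a ^ (1 : ℝ) := (Real.rpow_one a).symm
      _ ≤ a ^ l := Real.rpow_le_rpow_of_exponent_ge ha h hl1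
  · calc min 1 a ≤ 1 := min_le_left _ _
      _ ≤ a ^ l := Real.one_le_rpow h.le hl0

lemma integrableOn_h {l : ℝ} (hl0 : 0 ≤ l) (hl1 : l < 1) :
    IntegrableOn (fun y : ℝ => y ^ l * v₀ y) (Ioi 0) := by
  have hmeas : Measurable fun y : ℝ => y ^ l * v₀ y := by
    apply Measurable.mul ?_ measurable_v₀
    fun_prop
  have h1 : IntegrableOn (fun y : ℝ => y ^ l * v₀ y) (Ioc 0 1) := by
    apply Integrable.mono' (g := fun _ : ℝ => (1 : ℝ))
    · exact integrableOn_const measure_Ioc_lt_top.ne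
    · exact hmeas.aestronglyMeasurable.restrict
    · rw [ae_restrict_iff' measurableSet_Ioc]
      filter_upwards with y hy
      rw [Real.norm_eq_abs, abs_of_nonneg (mul_nonneg (Real.rpow_nonneg hy.1.le l) (v₀_nonneg y))]
      calc y ^ l * v₀ y ≤ 1 * 1 :=
        mul_le_mul (Real.rpow_le_one hy.1.le hy.2 hl0) (v₀_le_one hy.1) (v₀_nonneg y) zero_le_one
        _ = 1 := mul_one 1
  have h2 : IntegrableOn (fun y : ℝ => y ^ l * v₀ y) (Ioi 1) := by
    have hbase : IntegrableOn (fun y : ℝ => y ^ (l - 2)) (Ioi 1) := by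
      rw [integrableOn_Ioi_rpow_iff zero_lt_one]
      linarith
    apply hbase.congr_fun ?_ measurableSet_Ioi
    intro y hy
    simp only [mem_Ioi] at hy
    have hy0 : (0 : ℝ) < y := by linarith
    simp only
    rw [show v₀ y = 1 / y ^ 2 by unfold v₀; rw [if_neg (by linarith)]]
    rw [Real.rpow_sub hy0, Real.rpow_two]
    ring
  have := h1.union h2
  rwa [Ioc_union_Ioi_eq_Ioi zero_le_one] at this

lemma vheat_key (ε : ℝ) (hε : 0 < ε) (hε2 : ε ≤ 1/2) :
    ∃ M : ℝ, ∀ t x : ℝ, 0 < t → 0 < x →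
      Real.exp (-x) * vheat t x * (t + 1) ^ (3 / 2 - ε) ≤ M := by
  set l : ℝ := 1 - ε with hldef
  have hl0 : 0 < l := by rw [hldef]; linarith
  have hl1 : l < 1 := by rw [hldef]; linarith
  set C := ∫ y in Ioi (0:ℝ), y ^ l * v₀ y with hCdef
  have hC0 : 0 ≤ C := setIntegral_nonneg measurableSet_Ioi fun y hy =>
    mul_nonneg (Real.rpow_nonneg (le_of_lt hy) l) (v₀_nonneg y)
  refine ⟨4 * (C + 1), ?_⟩
  intro t x ht hx
  have hexp : Real.exp (-x) ≤ 1 := Real.exp_le_one_iff.2 (by linarith)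
  have hvn : 0 ≤ vheat t x := vheat_nonneg t x ht hx
  have hεp : (0:ℝ) ≤ 3/2 - ε := by linarith
  rcases le_or_gt t 1 with hsm | hbig
  · have hP : (t+1) ^ ((3:ℝ)/2-ε) ≤ 4 := by
      calc (t+1) ^ ((3:ℝ)/2-ε) ≤ (2:ℝ) ^ ((3:ℝ)/2-ε) :=
            Real.rpow_le_rpow (by linarith) (by linarith) hεp
        _ ≤ (2:ℝ) ^ (2:ℝ) := Real.rpow_le_rpow_of_exponent_le one_le_two (by linarith)
        _ = 4 := by rw [Real.rpow_two]; norm_num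
    have hA : Real.exp (-x) * vheat t x ≤ 1 :=
      mul_le_one₀ hexp hvn (vheat_le_one t x ht hx)
    calc Real.exp (-x) * vheat t x * (t+1) ^ ((3:ℝ)/2-ε) ≤ 1 * 4 :=
          mul_le_mul hA hP (Real.rpow_nonneg (by linarith) _) zero_le_one
      _ ≤ 4 * (C+1) := by linarith
  · have hgi : IntegrableOn (fun y : ℝ => t ^ (-l) * (y ^ l * v₀ y)) (Ioi 0) :=
      (integrableOn_h hl0.le hl1).const_mul _
    have hmain : (∫ y in Ioi (0:ℝ), Real.exp (-x) *
        ((Real.exp (-(x - y) ^ 2 / (4 * t)) - Real.exp (-(x + y) ^ 2 / (4 * t))) * v₀ y))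
        ≤ t ^ (-l) * C := by
      refine le_trans (integral_mono_of_nonneg ?_ hgi ?_) ?_
      · rw [EventuallyLE, ae_restrict_iff' measurableSet_Ioi]
        filter_upwards with y hy
        exact mul_nonneg (Real.exp_nonneg _)
          (mul_nonneg (diff_nonneg_pt ht hx hy) (v₀_nonneg y))
      · rw [EventuallyLE, ae_restrict_iff' measurableSet_Ioi]
        filter_upwards with y hy
        simp only [mem_Ioi] at hy
        set d := Real.exp (-(x - y) ^ 2 / (4 * t)) - Real.exp (-(x + y) ^ 2 / (4 * t)) with hd
        have hd0 : 0 ≤ d := diff_nonneg_pt ht hx hy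
        have hd1 : d ≤ 1 := by
          have h1 : Real.exp (-(x - y) ^ 2 / (4 * t)) ≤ 1 := by
            apply Real.exp_le_one_iff.2
            apply div_nonpos_of_nonpos_of_nonneg (neg_nonpos.2 (sq_nonneg _)) (by positivity)
          have h2 := Real.exp_pos (-(x + y) ^ 2 / (4 * t))
          rw [hd]; linarith
        have hdx : d ≤ x * y / t := by
          have heq : -(x - y) ^ 2 / (4 * t) = -((x - y) ^ 2 / (4 * t)) := by ring
          have heq2 : -(x + y) ^ 2 / (4 * t) = -((x + y) ^ 2 / (4 * t)) := by ring
          have h3 := exp_diff_le (a := (x - y) ^ 2 / (4 * t)) (b := (x + y) ^ 2 / (4 * t))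
            (by positivity) ((div_le_div_iff_of_pos_right (by positivity)).2 (by nlinarith))
          have h4 : (x + y) ^ 2 / (4 * t) - (x - y) ^ 2 / (4 * t) = x * y / t := by
            field_simp; ring
          rw [hd, heq, heq2]
          linarith
        have h5 : Real.exp (-x) * d ≤ min 1 (y / t) := by
          apply le_min
          · calc Real.exp (-x) * d ≤ 1 * 1 := mul_le_mul hexp hd1 hd0 zero_le_one
              _ = 1 := mul_one 1
          · calc Real.exp (-x) * d ≤ Real.exp (-x) * (x * y / t) :=
                mul_le_mul_of_nonneg_left hdx (Real.exp_nonneg _)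
              _ = (x * Real.exp (-x)) * (y / t) := by ring
              _ ≤ 1 * (y / t) := mul_le_mul_of_nonneg_right self_mul_exp_neg_le_one
                  (by positivity)
              _ = y / t := one_mul _
        have h6 : min 1 (y / t) ≤ (y / t) ^ l := min_le_rpow (div_pos hy ht) hl0.le hl1.le
        have h7 : (y / t) ^ l = t ^ (-l) * y ^ l := by
          rw [Real.div_rpow hy.le ht.le, Real.rpow_neg ht.le]
          ring
        calc Real.exp (-x) * ((Real.exp (-(x - y) ^ 2 / (4 * t)) -
              Real.exp (-(x + y) ^ 2 / (4 * t))) * v₀ y) = (Real.exp (-x) * d) * v₀ y := by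
              rw [hd]; ring
          _ ≤ ((y / t) ^ l) * v₀ y :=
              mul_le_mul_of_nonneg_right (h5.trans h6) (v₀_nonneg y)
          _ = t ^ (-l) * (y ^ l * v₀ y) := by rw [h7]; ring
      · rw [integral_const_mul]
    have hB : Real.exp (-x) * vheat t x ≤ (Real.sqrt (4 * Real.pi * t))⁻¹ * (t ^ (-l) * C) := by
      unfold vheat
      rw [show Real.exp (-x) * ((Real.sqrt (4 * Real.pi * t))⁻¹ *
          ∫ y in Set.Ioi (0 : ℝ),
            (Real.exp (-(x - y) ^ 2 / (4 * t)) - Real.exp (-(x + y) ^ 2 / (4 * t))) * v₀ y) =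
          (Real.sqrt (4 * Real.pi * t))⁻¹ * ∫ y in Set.Ioi (0 : ℝ), Real.exp (-x) *
            ((Real.exp (-(x - y) ^ 2 / (4 * t)) - Real.exp (-(x + y) ^ 2 / (4 * t))) * v₀ y)
          by rw [integral_const_mul]; ring]
      exact mul_le_mul_of_nonneg_left hmain (by positivity)
    have hB0 : 0 ≤ (Real.sqrt (4 * Real.pi * t))⁻¹ * (t ^ (-l) * C) := by positivity
    have hsqrt : (Real.sqrt (4 * Real.pi * t))⁻¹ ≤ t ^ (-(1/2) : ℝ) := by
      rw [show t ^ (-(1/2) : ℝ) = (t ^ ((1/2) : ℝ))⁻¹ by rw [← Real.rpow_neg ht.le]]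
      apply inv_anti₀ (by positivity)
      rw [← Real.sqrt_eq_rpow]
      apply Real.sqrt_le_sqrt
      nlinarith [Real.pi_gt_three]
    have hP : (t+1) ^ ((3:ℝ)/2-ε) ≤ 4 * t ^ ((3:ℝ)/2-ε) := by
      calc (t+1) ^ ((3:ℝ)/2-ε) ≤ (2*t) ^ ((3:ℝ)/2-ε) :=
            Real.rpow_le_rpow (by linarith) (by linarith) hεp
        _ = 2 ^ ((3:ℝ)/2-ε) * t ^ ((3:ℝ)/2-ε) := Real.mul_rpow (by norm_num) ht.le
        _ ≤ 4 * t ^ ((3:ℝ)/2-ε) := by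
            apply mul_le_mul_of_nonneg_right ?_ (Real.rpow_nonneg ht.le _)
            calc (2:ℝ) ^ ((3:ℝ)/2-ε) ≤ (2:ℝ) ^ (2:ℝ) :=
                  Real.rpow_le_rpow_of_exponent_le one_le_two (by linarith)
              _ = 4 := by rw [Real.rpow_two]; norm_num
    have hrw : t ^ (-(1/2) : ℝ) * t ^ (-l) * t ^ ((3:ℝ)/2-ε) = 1 := by
      rw [← Real.rpow_add ht, ← Real.rpow_add ht,
        show (-(1/2) : ℝ) + -l + ((3:ℝ)/2-ε) = 0 by rw [hldef]; ring, Real.rpow_zero]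
    calc Real.exp (-x) * vheat t x * (t+1) ^ ((3:ℝ)/2-ε)
        ≤ ((Real.sqrt (4 * Real.pi * t))⁻¹ * (t ^ (-l) * C)) * (4 * t ^ ((3:ℝ)/2-ε)) :=
          mul_le_mul hB hP (Real.rpow_nonneg (by linarith) _) hB0
      _ ≤ (t ^ (-(1/2) : ℝ) * (t ^ (-l) * C)) * (4 * t ^ ((3:ℝ)/2-ε)) := by
          apply mul_le_mul_of_nonneg_right ?_ (by positivity)
          exact mul_le_mul_of_nonneg_right hsqrt (by positivity)
      _ = 4 * C := by linear_combination (4 * C) * hrw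
      _ ≤ 4 * (C+1) := by linarith


/-- Lemma 5.2: for every `ε > 0`, `e^{-x} v(t,x) (t+1)^{3/2-ε}` is bounded over
`t > 0`, `x > 0`. -/
theorem vheat_decay :
    ∀ ε : ℝ, 0 < ε →
      ∃ M : ℝ, ∀ t x : ℝ, 0 < t → 0 < x →
        Real.exp (-x) * vheat t x * (t + 1) ^ (3 / 2 - ε) ≤ M := by
  intro ε hε
  obtain ⟨M, hM⟩ := vheat_key (min ε (1/2)) (lt_min hε (by norm_num)) (min_le_right _ _)
  refine ⟨M, fun t x ht hx => ?_⟩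
  refine le_trans ?_ (hM t x ht hx)
  apply mul_le_mul_of_nonneg_left ?_
    (mul_nonneg (Real.exp_nonneg _) (vheat_nonneg t x ht hx))
  apply Real.rpow_le_rpow_of_exponent_le (by linarith)
  have := min_le_left ε (1/2)
  linarith
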